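/- Let A be a unital C*-algebra with an involutive grading Θ, let ω be a state on A, and let B ⊆ A be a closed Θ-invariant star-subalgebra such that sup{ |ω(b) − ω(Θ(b))| : b ∈ B, ‖b‖ ≤ 1 } = 2. Then for every ε > 0 there exists a self-adjoint odd element a ∈ B (a⋆ = a, Θ(a) = −a) with ‖a‖ ≤ 1 and ω(a) > (1 − ε)/√2. -/

import Mathlib

/-- Let `A` be a unital C*-algebra with an involutive grading `Θ`,
`ω` a state on `A`, and `B ⊆ A` a closed `Θ`-invariant star-subalgebra with
`sup { |ω(b) − ω(Θ b)| : b ∈ B, ‖b‖ ≤ 1 } = 2`. Then for every `ε > 0` there is a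
self-adjoint odd `a ∈ B` with `‖a‖ ≤ 1` and `ω a > (1 − ε)/√2` (the value `ω a`
being real for self-adjoint `a`, this is expressed via the real part). -/
theorem exists_selfAdjoint_odd_large_expectation
    {A : Type*} [NormedRing A] [StarRing A] [CStarRing A]
    [NormedAlgebra ℂ A] [StarModule ℂ A] [CompleteSpace A]
    (Θ : A ≃⋆ₐ[ℂ] A) (hΘinv : ∀ a : A, Θ (Θ a) = a)
    (ω : A →L[ℂ] ℂ) (hω1 : ω 1 = 1)
    (hωpos : ∀ a : A, ∃ r : ℝ, 0 ≤ r ∧ ω (star a * a) = r)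
    (B : StarSubalgebra ℂ A) (hBclosed : IsClosed (B : Set A))
    (hBinv : ∀ b ∈ B, Θ b ∈ B)
    (hsup : sSup {r : ℝ | ∃ b ∈ B, ‖b‖ ≤ 1 ∧ r = ‖ω b - ω (Θ b)‖} = 2) :
    ∀ ε > (0 : ℝ), ∃ a ∈ B, star a = a ∧ Θ a = -a ∧ ‖a‖ ≤ 1 ∧
      (1 - ε) / Real.sqrt 2 < (ω a).re := by
  letI : CStarAlgebra A :=
    { ‹NormedRing A›, ‹StarRing A›, ‹CStarRing A›, ‹NormedAlgebra ℂ A›,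
      ‹StarModule ℂ A›, ‹CompleteSpace A› with }
  intro ε hε
  -- ω is real on self-adjoint elements
  have herm : ∀ x : A, star x = x → ∃ r : ℝ, ω x = (r : ℂ) := by
    intro x hx
    obtain ⟨r1, -, h1⟩ := hωpos (1 + x)
    obtain ⟨r2, -, h2⟩ := hωpos x
    refine ⟨(r1 - 1 - r2) / 2, ?_⟩
    have e : star (1 + x) * (1 + x) = 1 + (x + x + star x * x) := by
      rw [star_add, star_one, hx]; noncomm_ring
    rw [e] at h1
    simp only [map_add, hω1] at h1
    rw [h2] at h1
    have hωx : ω x = ((r1 : ℂ) - 1 - r2) / 2 := by linear_combination h1 / 2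
    rw [hωx]; push_cast; ring
  -- extract a good element from the sSup hypothesis
  have hne : ((0 : ℝ)) ∈ {r : ℝ | ∃ b ∈ B, ‖b‖ ≤ 1 ∧ r = ‖ω b - ω (Θ b)‖} :=
    ⟨0, B.zero_mem, by simp⟩
  have hlt : (2 : ℝ) - ε < sSup {r : ℝ | ∃ b ∈ B, ‖b‖ ≤ 1 ∧ r = ‖ω b - ω (Θ b)‖} := by
    rw [hsup]; linarith
  obtain ⟨r0, ⟨b, hbB, hbn, hr0⟩, hr0lt⟩ := exists_lt_of_lt_csSup ⟨0, hne⟩ hlt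
  -- the odd part of b
  obtain ⟨c, hc⟩ : ∃ c : A, c = (2 : ℂ)⁻¹ • (b - Θ b) := ⟨_, rfl⟩
  have hcB : c ∈ B := hc ▸ B.smul_mem (B.sub_mem hbB (hBinv b hbB)) _
  have hΘc : Θ c = -c := by
    rw [hc, map_smul, map_sub, hΘinv, ← smul_neg, neg_sub]
  have hcn : ‖c‖ ≤ 1 := by
    have hΘb : ‖Θ b‖ = ‖b‖ := StarAlgEquiv.norm_map Θ b
    calc ‖c‖ = ‖(2 : ℂ)⁻¹‖ * ‖b - Θ b‖ := by rw [hc, norm_smul]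
    _ ≤ ‖(2 : ℂ)⁻¹‖ * (‖b‖ + ‖Θ b‖) := by gcongr; exact norm_sub_le _ _
    _ ≤ (1/2) * (1 + 1) := by
        rw [hΘb, show ‖(2:ℂ)⁻¹‖ = 1/2 by simp]; gcongr <;> linarith
    _ = 1 := by norm_num
  have hωcn : 1 - ε / 2 < ‖ω c‖ := by
    have h2 : ‖ω c‖ = (1/2) * ‖ω b - ω (Θ b)‖ := by
      rw [hc, map_smul, map_sub, smul_eq_mul, norm_mul, show ‖(2:ℂ)⁻¹‖ = 1/2 by simp]
    have h3 : 2 - ε < ‖ω b - ω (Θ b)‖ := hr0 ▸ hr0lt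
    rw [h2]; linarith
  -- hermitian decomposition c = x + I • y
  obtain ⟨x, hx⟩ : ∃ x : A, x = (2 : ℂ)⁻¹ • (c + star c) := ⟨_, rfl⟩
  obtain ⟨y, hy⟩ : ∃ y : A, y = (-(Complex.I) / 2) • (c - star c) := ⟨_, rfl⟩
  have hstarcB : star c ∈ B := star_mem hcB
  have hxB : x ∈ B := hx ▸ B.smul_mem (B.add_mem hcB hstarcB) _
  have hyB : y ∈ B := hy ▸ B.smul_mem (B.sub_mem hcB hstarcB) _
  have hxsa : star x = x := by
    rw [hx, star_smul, star_add, star_star, show star ((2:ℂ)⁻¹) = (2:ℂ)⁻¹ by simp,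
      add_comm (star c) c]
  have hysa : star y = y := by
    rw [hy, star_smul, star_sub, star_star,
      show star (-(Complex.I) / 2) = Complex.I / 2 by
        simp [Complex.star_def, div_eq_mul_inv],
      ← neg_sub c (star c), smul_neg, ← neg_smul, ← neg_div]
  have hΘstarc : Θ (star c) = -(star c) := by rw [map_star, hΘc, star_neg]
  have hΘx : Θ x = -x := by
    have h0 : Θ x = (2 : ℂ)⁻¹ • (Θ c + Θ (star c)) := by rw [hx, map_smul, map_add]
    rw [h0, hΘc, hΘstarc, hx]; module
  have hΘy : Θ y = -y := by
    have h0 : Θ y = (-(Complex.I) / 2) • (Θ c - Θ (star c)) := by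
      rw [hy, map_smul, map_sub]
    rw [h0, hΘc, hΘstarc, hy]; module
  have hxn : ‖x‖ ≤ 1 := by
    calc ‖x‖ = ‖(2 : ℂ)⁻¹‖ * ‖c + star c‖ := by rw [hx, norm_smul]
    _ ≤ ‖(2 : ℂ)⁻¹‖ * (‖c‖ + ‖star c‖) := by gcongr; exact norm_add_le _ _
    _ ≤ (1/2) * (1 + 1) := by
        rw [norm_star, show ‖(2:ℂ)⁻¹‖ = 1/2 by simp]; gcongr <;> linarith
    _ = 1 := by norm_num
  have hyn : ‖y‖ ≤ 1 := by
    calc ‖y‖ = ‖-(Complex.I) / 2‖ * ‖c - star c‖ := by rw [hy, norm_smul]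
    _ ≤ ‖-(Complex.I) / 2‖ * (‖c‖ + ‖star c‖) := by gcongr; exact norm_sub_le _ _
    _ ≤ (1/2) * (1 + 1) := by
        rw [norm_star, show ‖-(Complex.I)/2‖ = 1/2 by simp]; gcongr <;> linarith
    _ = 1 := by norm_num
  have hdecomp : x + Complex.I • y = c := by
    rw [hx, hy, smul_smul]
    have h1 : Complex.I * (-(Complex.I) / 2) = (2 : ℂ)⁻¹ := by
      linear_combination (-(1:ℂ)/2) * Complex.I_mul_I
    rw [h1]; module
  obtain ⟨r, hr⟩ := herm x hxsa
  obtain ⟨s, hs⟩ := herm y hysa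
  have hωc2 : ω c = (r : ℂ) + (s : ℂ) * Complex.I := by
    have h0 : ω c = ω x + Complex.I * ω y := by
      rw [← hdecomp, map_add, map_smul, smul_eq_mul]
    rw [h0, hr, hs]; ring
  have hre : (ω c).re = r := by rw [hωc2]; simp
  have him : (ω c).im = s := by rw [hωc2]; simp
  have habs : ‖ω c‖ ≤ Real.sqrt 2 * max |r| |s| := by
    have h0 := Complex.norm_le_sqrt_two_mul_max (ω c)
    rwa [hre, him] at h0
  have hs2 : (0:ℝ) < Real.sqrt 2 := by positivity
  have hmax : (1 - ε) / Real.sqrt 2 < max |r| |s| := by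
    rw [div_lt_iff₀ hs2]
    nlinarith
  -- helper: conclude from a candidate
  have main : ∀ t : A, t ∈ B → star t = t → Θ t = -t → ‖t‖ ≤ 1 →
      ∀ u : ℝ, ω t = (u : ℂ) → (1 - ε) / Real.sqrt 2 < |u| →
      ∃ a ∈ B, star a = a ∧ Θ a = -a ∧ ‖a‖ ≤ 1 ∧ (1 - ε) / Real.sqrt 2 < (ω a).re := by
    intro t htB hts htΘ htn u hu hult
    rcases le_or_gt 0 u with h | h
    · refine ⟨t, htB, hts, htΘ, htn, ?_⟩
      rw [hu, Complex.ofReal_re]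
      rwa [abs_of_nonneg h] at hult
    · refine ⟨-t, B.neg_mem htB, by rw [star_neg, hts], by rw [map_neg, htΘ, neg_neg],
        by rwa [norm_neg], ?_⟩
      rw [map_neg, hu, ← Complex.ofReal_neg, Complex.ofReal_re]
      rwa [abs_of_neg h] at hult
  rcases le_total |s| |r| with h | h
  · exact main x hxB hxsa hΘx hxn r hr (by rwa [max_eq_left h] at hmax)
  · exact main y hyB hysa hΘy hyn s hs (by rwa [max_eq_right h] at hmax)
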